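/- Let d be a positive integer, α > 1, σ > 0, and let μ, μ' ∈ ℝ^d. Then the Rényi divergence of order α between the product measure ⊗_{i=1}^d N(μ_i, σ²) (d independent Gaussian coordinates with means μ_i and common variance σ²) and the product measure ⊗_{i=1}^d N(μ'_i, σ²) equals α·‖μ − μ'‖²/(2σ²), where ‖·‖ is the Euclidean norm on ℝ^d. -/

import Mathlib

open MeasureTheory ProbabilityTheory
open scoped BigOperators

/-- The Rényi divergence of order `α` between measures `P` and `Q`:
`D_α(P‖Q) = (1/(α−1)) · log ∫ (dP/dQ)^α dQ`. -/
noncomputable def renyiDiv {Ω : Type*} [MeasurableSpace Ω] (α : ℝ)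
    (P Q : Measure Ω) : ℝ :=
  (α - 1)⁻¹ * Real.log (∫ x, (P.rnDeriv Q x).toReal ^ α ∂Q)

lemma lintegral_pi_prod {n : ℕ} (Q : Fin n → Measure ℝ) [∀ i, SigmaFinite (Q i)]
    (f : Fin n → ℝ → ENNReal) (hf : ∀ i, Measurable (f i)) :
    ∫⁻ x, ∏ i, f i (x i) ∂Measure.pi Q = ∏ i, ∫⁻ y, f i y ∂Q i := by
  induction n with
  | zero => simp [Measure.pi_of_empty]
  | succ n ih =>
    have h := measurePreserving_piFinSuccAbove Q 0
    set g : (Fin n → ℝ) → ENNReal := fun y => ∏ i, f ((0 : Fin (n+1)).succAbove i) (y i) with hgdef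
    have hgm : Measurable g :=
      Finset.measurable_prod _ fun i _ => (hf _).comp (measurable_pi_apply i)
    have hg : Measurable (fun p : ℝ × (Fin n → ℝ) => f 0 p.1 * g p.2) :=
      ((hf 0).comp measurable_fst).mul (hgm.comp measurable_snd)
    calc ∫⁻ x, ∏ i, f i (x i) ∂Measure.pi Q
        = ∫⁻ x, f 0 (x 0) * ∏ i : Fin n,
            f ((0 : Fin (n+1)).succAbove i) (x ((0 : Fin (n+1)).succAbove i)) ∂Measure.pi Q := by
          congr 1; ext x
          exact Fin.prod_univ_succAbove (fun j => f j (x j)) 0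
      _ = ∫⁻ p, f 0 p.1 * g p.2
            ∂((Q 0).prod (Measure.pi fun j => Q ((0 : Fin (n+1)).succAbove j))) := by
          rw [← h.lintegral_comp hg]
          simp only [hgdef, MeasurableEquiv.piFinSuccAbove_apply, Fin.insertNthEquiv,
            Equiv.symm, Fin.tail]
          rfl
      _ = (∫⁻ y, f 0 y ∂Q 0) * ∫⁻ y, g y ∂(Measure.pi fun j => Q ((0 : Fin (n+1)).succAbove j)) :=
          lintegral_prod_mul (hf 0).aemeasurable hgm.aemeasurable
      _ = (∫⁻ y, f 0 y ∂Q 0) * ∏ i, ∫⁻ y, f ((0 : Fin (n+1)).succAbove i) y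
            ∂Q ((0 : Fin (n+1)).succAbove i) := by
          rw [hgdef, ih _ _ (fun i => hf _)]
      _ = ∏ i, ∫⁻ y, f i y ∂Q i :=
          (Fin.prod_univ_succAbove (fun j => ∫⁻ y, f j y ∂Q j) 0).symm

lemma pi_withDensity {n : ℕ} (Q : Fin n → Measure ℝ) [∀ i, SigmaFinite (Q i)]
    (f : Fin n → ℝ → ENNReal) (hf : ∀ i, Measurable (f i))
    [∀ i, SigmaFinite ((Q i).withDensity (f i))] :
    Measure.pi (fun i => (Q i).withDensity (f i)) =
      (Measure.pi Q).withDensity (fun x => ∏ i, f i (x i)) := by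
  apply Measure.pi_eq
  intro s hs
  have hF : Measurable (fun x : Fin n → ℝ => ∏ i, f i (x i)) :=
    Finset.measurable_prod _ fun i _ => (hf _).comp (measurable_pi_apply i)
  rw [withDensity_apply _ (MeasurableSet.univ_pi hs),
    ← lintegral_indicator (MeasurableSet.univ_pi hs)]
  have : ∀ x : Fin n → ℝ, (Set.pi Set.univ s).indicator (fun x => ∏ i, f i (x i)) x
      = ∏ i, (s i).indicator (f i) (x i) := by
    intro x
    by_cases hx : x ∈ Set.pi Set.univ s
    · rw [Set.indicator_of_mem hx]
      exact Finset.prod_congr rfl fun i _ =>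
        (Set.indicator_of_mem (hx i (Set.mem_univ i)) _).symm
    · rw [Set.indicator_of_notMem hx]
      have : ∃ i, x i ∉ s i := by simpa [Set.mem_pi] using hx
      obtain ⟨i, hi⟩ := this
      exact (Finset.prod_eq_zero (Finset.mem_univ i)
        (by rw [Set.indicator_of_notMem hi])).symm
  simp_rw [this]
  rw [lintegral_pi_prod Q _ (fun i => (hf i).indicator (hs i))]
  exact Finset.prod_congr rfl fun i _ => by
    rw [lintegral_indicator (hs i), withDensity_apply _ (hs i)]

lemma exp_helper1 (A u w s D : ℝ) (h : u + w = D + s) :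
    A * Real.exp u * Real.exp w = Real.exp D * (A * Real.exp s) := by
  rw [mul_assoc, ← Real.exp_add, h, Real.exp_add]; ring

lemma exp_helper2 (A u w r : ℝ) (h : u = w + r) :
    A * Real.exp u = A * Real.exp w * Real.exp r := by
  rw [h, Real.exp_add]; ring

lemma measurable_expRatio (σ m m' c : ℝ) :
    Measurable (fun x : ℝ => ENNReal.ofReal (Real.exp (c * (((x - m')^2 - (x - m)^2) / (2*σ^2))))) := by
  fun_prop

lemma gaussian_withDensity (σ : ℝ) (hσ : 0 < σ) (m m' : ℝ) :
    gaussianReal m ((σ^2).toNNReal) = (gaussianReal m' ((σ^2).toNNReal)).withDensity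
      (fun x => ENNReal.ofReal (Real.exp (((x - m')^2 - (x - m)^2) / (2*σ^2)))) := by
  have hv : ((σ^2).toNNReal) ≠ 0 := (Real.toNNReal_pos.2 (by positivity)).ne'
  have hcoe : (((σ^2).toNNReal : ℝ)) = σ^2 := Real.coe_toNNReal _ (sq_nonneg σ)
  rw [gaussianReal_of_var_ne_zero _ hv, gaussianReal_of_var_ne_zero _ hv,
    ← withDensity_mul _ (measurable_gaussianPDF _ _)
      (by simpa using measurable_expRatio σ m m' 1)]
  congr 1
  ext x
  simp only [Pi.mul_apply, gaussianPDF]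
  rw [← ENNReal.ofReal_mul (le_of_lt (gaussianPDFReal_pos _ _ _ hv))]
  congr 1
  simp only [gaussianPDFReal, hcoe]
  exact exp_helper2 _ _ _ _ (by field_simp; ring)

lemma lintegral_expRatio (σ : ℝ) (hσ : 0 < σ) (α m m' : ℝ) :
    ∫⁻ x, ENNReal.ofReal (Real.exp (α * (((x - m')^2 - (x - m)^2) / (2*σ^2))))
        ∂(gaussianReal m' ((σ^2).toNNReal))
      = ENNReal.ofReal (Real.exp (α * (α - 1) * (m - m')^2 / (2*σ^2))) := by
  have hv : ((σ^2).toNNReal) ≠ 0 := (Real.toNNReal_pos.2 (by positivity)).ne'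
  have hcoe : (((σ^2).toNNReal : ℝ)) = σ^2 := Real.coe_toNNReal _ (sq_nonneg σ)
  rw [gaussianReal_of_var_ne_zero _ hv,
    lintegral_withDensity_eq_lintegral_mul _ (measurable_gaussianPDF _ _)
      (measurable_expRatio σ m m' α)]
  have key : ∀ x : ℝ, gaussianPDF m' ((σ^2).toNNReal) x *
      ENNReal.ofReal (Real.exp (α * (((x - m')^2 - (x - m)^2) / (2*σ^2))))
      = ENNReal.ofReal (Real.exp (α * (α - 1) * (m - m')^2 / (2*σ^2)))
        * gaussianPDF (m' + α * (m - m')) ((σ^2).toNNReal) x := by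
    intro x
    simp only [gaussianPDF]
    rw [← ENNReal.ofReal_mul (le_of_lt (gaussianPDFReal_pos _ _ _ hv)),
      ← ENNReal.ofReal_mul (Real.exp_nonneg _)]
    congr 1
    simp only [gaussianPDFReal, hcoe]
    exact exp_helper1 _ _ _ _ _ (by field_simp; ring)
  simp only [Pi.mul_apply, key]
  rw [lintegral_const_mul _ (measurable_gaussianPDF _ _), lintegral_gaussianPDF_eq_one _ hv,
    mul_one]

/-- **Rényi divergence between isotropic multivariate Gaussians of equal variance.**
For `d ≥ 1`, `α > 1`, `σ > 0` and `μ, μ' ∈ ℝ^d`, the Rényi divergence of order `α` between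
the product measure `⊗_{i} N(μ_i, σ²)` and `⊗_{i} N(μ'_i, σ²)` equals
`α·‖μ − μ'‖²/(2σ²)`, where `‖μ − μ'‖² = ∑ i, (μ i − μ' i)²` is the squared Euclidean norm. -/
theorem renyiDiv_gaussian_pi (d : ℕ) (hd : 0 < d) (α σ : ℝ) (hα : 1 < α) (hσ : 0 < σ)
    (μ μ' : Fin d → ℝ) :
    renyiDiv α
        (Measure.pi fun i => gaussianReal (μ i) ((σ ^ 2).toNNReal))
        (Measure.pi fun i => gaussianReal (μ' i) ((σ ^ 2).toNNReal)) =
      α * (∑ i, (μ i - μ' i) ^ 2) / (2 * σ ^ 2) := by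
  set Q : Measure (Fin d → ℝ) := Measure.pi fun i => gaussianReal (μ' i) ((σ ^ 2).toNNReal)
    with hQ
  set g : Fin d → ℝ → ℝ :=
    fun i x => Real.exp (((x - μ' i)^2 - (x - μ i)^2) / (2*σ^2)) with hg
  set f : Fin d → ℝ → ENNReal := fun i x => ENNReal.ofReal (g i x) with hf
  have hfm : ∀ i, Measurable (f i) := fun i => by
    simpa [hf, hg] using measurable_expRatio σ (μ i) (μ' i) 1
  set F : (Fin d → ℝ) → ENNReal := fun x => ∏ i, f i (x i) with hF
  have hFm : Measurable F :=
    Finset.measurable_prod _ fun i _ => (hfm i).comp (measurable_pi_apply i)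
  haveI : ∀ i, SigmaFinite ((gaussianReal (μ' i) ((σ ^ 2).toNNReal)).withDensity (f i)) :=
    fun i => by
      rw [hf]
      rw [(by simpa [hg] using (gaussian_withDensity σ hσ (μ i) (μ' i)).symm :
        (gaussianReal (μ' i) ((σ ^ 2).toNNReal)).withDensity
          (fun x => ENNReal.ofReal (g i x)) = gaussianReal (μ i) ((σ ^ 2).toNNReal))]
      infer_instance
  have hP : (Measure.pi fun i => gaussianReal (μ i) ((σ ^ 2).toNNReal))
      = Q.withDensity F := by
    have : (fun i => gaussianReal (μ i) ((σ ^ 2).toNNReal))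
        = fun i => (gaussianReal (μ' i) ((σ ^ 2).toNNReal)).withDensity (f i) :=
      funext fun i => by simpa [hf, hg] using gaussian_withDensity σ hσ (μ i) (μ' i)
    rw [this, pi_withDensity _ _ hfm]
  have hrn : (Measure.pi fun i => gaussianReal (μ i) ((σ ^ 2).toNNReal)).rnDeriv Q
      =ᵐ[Q] F := by
    rw [hP]; exact Measure.rnDeriv_withDensity Q hFm
  have hInt : ∫ x, ((Measure.pi fun i => gaussianReal (μ i) ((σ ^ 2).toNNReal)).rnDeriv Q
      x).toReal ^ α ∂Q = ∫ x, ∏ i, Real.exp (α * (((x i - μ' i)^2 - (x i - μ i)^2)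
        / (2*σ^2))) ∂Q := by
    refine integral_congr_ae ?_
    filter_upwards [hrn] with x hx
    rw [hx, hF]
    simp only [hf]
    rw [ENNReal.toReal_prod]
    rw [← Real.finset_prod_rpow _ _ (fun i _ => ENNReal.toReal_nonneg) α]
    refine Finset.prod_congr rfl fun i _ => ?_
    rw [ENNReal.toReal_ofReal (Real.exp_nonneg _), ← Real.exp_mul]
    congr 1
    ring
  rw [renyiDiv, hInt]
  have hnn : 0 ≤ᵐ[Q] fun x => ∏ i, Real.exp (α * (((x i - μ' i)^2 - (x i - μ i)^2)
      / (2*σ^2))) :=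
    Filter.Eventually.of_forall fun x =>
      Finset.prod_nonneg fun i _ => Real.exp_nonneg _
  have hmeas : AEStronglyMeasurable (fun x : Fin d → ℝ => ∏ i, Real.exp (α *
      (((x i - μ' i)^2 - (x i - μ i)^2) / (2*σ^2)))) Q := by
    apply Measurable.aestronglyMeasurable
    fun_prop
  rw [integral_eq_lintegral_of_nonneg_ae hnn hmeas]
  have : ∫⁻ x, ENNReal.ofReal (∏ i, Real.exp (α * (((x i - μ' i)^2 - (x i - μ i)^2)
      / (2*σ^2)))) ∂Q = ENNReal.ofReal (Real.exp (α * (α - 1) * (∑ i, (μ i - μ' i)^2)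
      / (2*σ^2))) := by
    have e1 : ∀ x : Fin d → ℝ, ENNReal.ofReal (∏ i, Real.exp (α *
        (((x i - μ' i)^2 - (x i - μ i)^2) / (2*σ^2))))
        = ∏ i, ENNReal.ofReal (Real.exp (α * (((x i - μ' i)^2 - (x i - μ i)^2)
          / (2*σ^2)))) := fun x =>
      ENNReal.ofReal_prod_of_nonneg fun i _ => Real.exp_nonneg _
    simp_rw [e1]
    rw [hQ, lintegral_pi_prod _ _ (fun i => measurable_expRatio σ (μ i) (μ' i) α)]
    have e2 : ∀ i : Fin d, ∫⁻ y, ENNReal.ofReal (Real.exp (α *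
        (((y - μ' i)^2 - (y - μ i)^2) / (2*σ^2)))) ∂(gaussianReal (μ' i) ((σ^2).toNNReal))
        = ENNReal.ofReal (Real.exp (α * (α - 1) * (μ i - μ' i)^2 / (2*σ^2))) :=
      fun i => lintegral_expRatio σ hσ α (μ i) (μ' i)
    simp_rw [e2]
    rw [← ENNReal.ofReal_prod_of_nonneg fun i _ => Real.exp_nonneg _, ← Real.exp_sum]
    congr 2
    rw [← Finset.sum_div, ← Finset.mul_sum]
  rw [this, ENNReal.toReal_ofReal (Real.exp_nonneg _), Real.log_exp]
  have hα1 : α - 1 ≠ 0 := sub_ne_zero.2 (ne_of_gt hα)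
  have hσ2 : (2 : ℝ) * σ^2 ≠ 0 := by positivity
  field_simp
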